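/- Let p be a probability distribution on [n] that is a k-histogram, let q : [n] → (0,∞), let ε > 0, and let I₁, …, I_K be a partition of [n] into K consecutive intervals. For each ℓ, let j_ℓ denote the minimal number of consecutive subintervals into which I_ℓ can be partitioned so that p is constant on each subinterval. Suppose G ⊆ {1,…,K} is a set of indices such that for every ℓ ∈ G the interval I_ℓ is not ε-bad, i.e., χ²_{I_ℓ}(p‖q) < j_ℓ·ε²/K. Then ∑_{ℓ∈G} χ²_{I_ℓ}(p‖q) < (K + k)·ε²/K. -/

import Mathlib

/-- `p` is `j`-piecewise constant on the integer interval `[a, b)`: there are breakpoints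
`a = f 0 < f 1 < ⋯ < f j = b` such that `p` is constant on each `[f i, f (i+1))`. -/
def PiecewiseConstOn (p : ℕ → ℝ) (a b : ℕ) (j : ℕ) : Prop :=
  ∃ f : Fin (j + 1) → ℕ, StrictMono f ∧ f 0 = a ∧ f (Fin.last j) = b ∧
    ∀ i : Fin j, ∀ x ∈ Finset.Ico (f i.castSucc) (f i.succ),
      ∀ y ∈ Finset.Ico (f i.castSucc) (f i.succ), p x = p y

/-- `p` is a `k`-histogram on `[n] = {1, …, n}`: the domain can be partitioned into at
most `k` consecutive intervals on each of which `p` is constant. -/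
def IsKHistogram (p : ℕ → ℝ) (n k : ℕ) : Prop :=
  ∃ j : ℕ, 1 ≤ j ∧ j ≤ k ∧ PiecewiseConstOn p 1 (n + 1) j

/-- Restricted chi-squared divergence `χ²_S(p‖q) = ∑_{i ∈ S} (p i - q i)² / q i`. -/
noncomputable def chiSq (S : Finset ℕ) (p q : ℕ → ℝ) : ℝ :=
  ∑ i ∈ S, (p i - q i) ^ 2 / q i


/-- If `p` is piecewise constant with breakpoints `f` and `x+1` is not a breakpoint,
then `p x = p (x+1)`. -/
lemma step_const (p : ℕ → ℝ) {J : ℕ} (f : Fin (J + 1) → ℕ) (hf : StrictMono f)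
    (hconst : ∀ i : Fin J, ∀ x ∈ Finset.Ico (f i.castSucc) (f i.succ),
      ∀ y ∈ Finset.Ico (f i.castSucc) (f i.succ), p x = p y)
    {x : ℕ} (hx1 : f 0 ≤ x) (hx2 : x + 1 < f (Fin.last J))
    (hbr : ∀ t : Fin (J + 1), f t ≠ x + 1) : p x = p (x + 1) := by
  classical
  set T : Finset (Fin (J + 1)) := Finset.univ.filter (fun t => f t ≤ x) with hT
  have hne : T.Nonempty := ⟨0, by simp [hT, hx1]⟩
  set t₀ := T.max' hne with ht₀
  have ht₀x : f t₀ ≤ x := (Finset.mem_filter.mp (T.max'_mem hne)).2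
  have htlt : (t₀ : ℕ) < J := by
    by_contra h
    have hle : (t₀ : ℕ) ≤ J := Nat.lt_succ_iff.mp t₀.isLt
    have heq : t₀ = Fin.last J := Fin.ext (by simp [Fin.last]; omega)
    rw [heq] at ht₀x; omega
  set i : Fin J := ⟨t₀, htlt⟩ with hi
  have hcs : i.castSucc = t₀ := Fin.ext rfl
  have hsuccgt : x < f i.succ := by
    by_contra h
    push_neg at h
    have hmem : i.succ ∈ T := Finset.mem_filter.mpr ⟨Finset.mem_univ _, h⟩
    have := T.le_max' _ hmem
    rw [← ht₀] at this
    have : (i.succ : ℕ) ≤ (t₀ : ℕ) := this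
    simp [Fin.val_succ, hi] at this
  have hsucc1 : x + 1 < f i.succ :=
    lt_of_le_of_ne (Nat.succ_le_of_lt hsuccgt) (fun h => hbr i.succ h.symm)
  have hxmem : x ∈ Finset.Ico (f i.castSucc) (f i.succ) := by
    rw [hcs]; exact Finset.mem_Ico.mpr ⟨ht₀x, hsuccgt⟩
  have hx1mem : x + 1 ∈ Finset.Ico (f i.castSucc) (f i.succ) := by
    rw [hcs]; exact Finset.mem_Ico.mpr ⟨le_trans ht₀x (Nat.le_succ x), hsucc1⟩
  exact hconst i x hxmem (x + 1) hx1mem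

/-- `p` is constant on a region containing no breakpoints in its interior. -/
lemma const_of_no_break (p : ℕ → ℝ) {J : ℕ} (f : Fin (J + 1) → ℕ) (hf : StrictMono f)
    (hconst : ∀ i : Fin J, ∀ x ∈ Finset.Ico (f i.castSucc) (f i.succ),
      ∀ y ∈ Finset.Ico (f i.castSucc) (f i.succ), p x = p y)
    {u v x y : ℕ} (hu : f 0 ≤ u) (hv : v ≤ f (Fin.last J))
    (hux : u ≤ x) (hxy : x ≤ y) (hyv : y < v)
    (hnb : ∀ z, u < z → z < v → ∀ t : Fin (J + 1), f t ≠ z) : p x = p y := by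
  induction y, hxy using Nat.le_induction with
  | base => rfl
  | succ m hm ih =>
    have hmv : m < v := by omega
    have h1 : p x = p m := ih hmv
    have h2 : p m = p (m + 1) := by
      apply step_const p f hf hconst (le_trans hu (le_trans hux hm)) (lt_of_lt_of_le hyv hv)
      intro t
      exact hnb (m + 1) (by omega) hyv t
    rw [h1, h2]

lemma sub_pco (p : ℕ → ℝ) {J : ℕ} (f : Fin (J + 1) → ℕ) (hf : StrictMono f)
    (hconst : ∀ i : Fin J, ∀ x ∈ Finset.Ico (f i.castSucc) (f i.succ),
      ∀ y ∈ Finset.Ico (f i.castSucc) (f i.succ), p x = p y)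
    {a b : ℕ} (hab : a < b) (hfa : f 0 ≤ a) (hbf : b ≤ f (Fin.last J)) :
    PiecewiseConstOn p a b
      ((Finset.Ioo a b ∩ Finset.image f Finset.univ).card + 1) := by
  classical
  set BF := Finset.Ioo a b ∩ Finset.image f Finset.univ with hBF
  set m := BF.card + 1 with hm
  set S : Finset ℕ := insert a (insert b BF) with hS
  have haBF : a ∉ BF := by simp [hBF]
  have hbBF : b ∉ BF := by simp [hBF]
  have hcard : S.card = m + 1 := by
    rw [hS, Finset.card_insert_of_notMem (by simp only [Finset.mem_insert]; push_neg; exact ⟨by omega, haBF⟩),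
      Finset.card_insert_of_notMem hbBF, hm]
  -- all elements of S lie in [a, b]
  have hmemS : ∀ z ∈ S, a ≤ z ∧ z ≤ b := by
    intro z hz
    rw [hS] at hz
    simp only [Finset.mem_insert] at hz
    rcases hz with rfl | rfl | hz
    · omega
    · omega
    · have := (Finset.mem_inter.mp hz).1
      rw [Finset.mem_Ioo] at this; omega
  set g : Fin (m + 1) → ℕ := fun i => (S.orderIsoOfFin hcard i : ℕ) with hg
  have hgS : ∀ i, g i ∈ S := fun i => (S.orderIsoOfFin hcard i).2
  have hgmono : StrictMono g := fun i j hij =>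
    Subtype.coe_lt_coe.mpr ((S.orderIsoOfFin hcard).strictMono hij)
  have hsurj : ∀ z ∈ S, ∃ i, g i = z := by
    intro z hz
    obtain ⟨i, hi⟩ := (S.orderIsoOfFin hcard).surjective ⟨z, hz⟩
    exact ⟨i, by simp only [hg, hi]⟩
  have hg0 : g 0 = a := by
    obtain ⟨i, hi⟩ := hsurj a (by simp [hS])
    have h1 : g 0 ≤ g i := hgmono.monotone (Fin.zero_le i)
    have h2 : a ≤ g 0 := (hmemS _ (hgS 0)).1
    omega
  have hglast : g (Fin.last m) = b := by
    obtain ⟨i, hi⟩ := hsurj b (by simp [hS])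
    have h1 : g i ≤ g (Fin.last m) := hgmono.monotone (Fin.le_last i)
    have h2 : g (Fin.last m) ≤ b := (hmemS _ (hgS _)).2
    omega
  refine ⟨g, hgmono, hg0, hglast, ?_⟩
  intro i x hx y hy
  rw [Finset.mem_Ico] at hx hy
  -- no breakpoint of f strictly between consecutive cut points
  have hnb : ∀ z, g i.castSucc < z → z < g i.succ → ∀ t : Fin (J + 1), f t ≠ z := by
    intro z hz1 hz2 t ht
    have hza : a < z := lt_of_le_of_lt (hmemS _ (hgS i.castSucc)).1 hz1
    have hzb : z < b := lt_of_lt_of_le hz2 (hmemS _ (hgS i.succ)).2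
    have hzS : z ∈ S := by
      rw [hS]
      refine Finset.mem_insert_of_mem (Finset.mem_insert_of_mem ?_)
      rw [hBF, Finset.mem_inter]
      exact ⟨Finset.mem_Ioo.mpr ⟨hza, hzb⟩, Finset.mem_image.mpr ⟨t, Finset.mem_univ t, ht⟩⟩
    obtain ⟨s, hs⟩ := hsurj z hzS
    have h1 : i.castSucc < s := hgmono.lt_iff_lt.mp (by omega)
    have h2 : i.succ ≤ s := Fin.castSucc_lt_iff_succ_le.mp h1
    have := hgmono.monotone h2
    omega
  have ha_le : a ≤ g i.castSucc := (hmemS _ (hgS _)).1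
  have hb_ge : g i.succ ≤ b := (hmemS _ (hgS _)).2
  rcases le_total x y with h | h
  · exact const_of_no_break p f hf hconst (le_trans hfa (le_trans ha_le hx.1)) (le_trans hb_ge hbf)
      le_rfl h hy.2 (fun z h1 h2 t => hnb z (lt_of_le_of_lt hx.1 h1) h2 t)
  · exact (const_of_no_break p f hf hconst (le_trans hfa (le_trans ha_le hy.1)) (le_trans hb_ge hbf)
      le_rfl h hx.2 (fun z h1 h2 t => hnb z (lt_of_le_of_lt hy.1 h1) h2 t)).symm

/-- Let `p` be a `k`-histogram distribution on `[n]`, `q` positive,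
and `I_1, …, I_K` a partition of `[n]` into consecutive intervals.  If `j ℓ` is the
minimal number of consecutive subintervals into which `I_ℓ` can be partitioned so that
`p` is constant on each, and every `ℓ ∈ G` satisfies `χ²_{I_ℓ}(p‖q) < j ℓ · ε²/K`
(is not ε-bad), then `∑_{ℓ ∈ G} χ²_{I_ℓ}(p‖q) < (K + k)·ε²/K`. -/
theorem good_intervals_chiSq_bound
    (n k K : ℕ) (hn : 0 < n) (hk : 0 < k) (hK : 0 < K)
    (p q : ℕ → ℝ)
    (hp0 : ∀ i ∈ Finset.Icc 1 n, 0 ≤ p i) (hp1 : ∑ i ∈ Finset.Icc 1 n, p i = 1)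
    (hhist : IsKHistogram p n k)
    (hq : ∀ i ∈ Finset.Icc 1 n, 0 < q i)
    (ε : ℝ) (hε : 0 < ε)
    (e : Fin (K + 1) → ℕ) (he : StrictMono e) (he0 : e 0 = 1)
    (heK : e (Fin.last K) = n + 1)
    (j : Fin K → ℕ)
    (hj : ∀ ℓ : Fin K,
      PiecewiseConstOn p (e ℓ.castSucc) (e ℓ.succ) (j ℓ) ∧
      ∀ j' < j ℓ, ¬ PiecewiseConstOn p (e ℓ.castSucc) (e ℓ.succ) j')
    (G : Finset (Fin K))
    (hG : ∀ ℓ ∈ G, chiSq (Finset.Ico (e ℓ.castSucc) (e ℓ.succ)) p q <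
        (j ℓ : ℝ) * ε ^ 2 / K) :
    ∑ ℓ ∈ G, chiSq (Finset.Ico (e ℓ.castSucc) (e ℓ.succ)) p q <
      ((K : ℝ) + k) * ε ^ 2 / K := by
  classical
  obtain ⟨J, hJ1, hJk, f, hf, hf0, hflast, hconst⟩ := hhist
  -- per-interval bound on minimal piece count
  set A : Fin K → Finset ℕ :=
    fun ℓ => Finset.Ioo (e ℓ.castSucc) (e ℓ.succ) ∩ Finset.image f Finset.univ with hA
  have hjle : ∀ ℓ : Fin K, j ℓ ≤ (A ℓ).card + 1 := by
    intro ℓ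
    have hab : e ℓ.castSucc < e ℓ.succ := he Fin.castSucc_lt_succ
    have hfa : f 0 ≤ e ℓ.castSucc := by
      rw [hf0, ← he0]; exact he.monotone (Fin.zero_le _)
    have hbf : e ℓ.succ ≤ f (Fin.last J) := by
      rw [hflast, ← heK]; exact he.monotone (Fin.le_last _)
    have hpco : PiecewiseConstOn p (e ℓ.castSucc) (e ℓ.succ) ((A ℓ).card + 1) :=
      sub_pco p f hf hconst hab hfa hbf
    by_contra h
    exact (hj ℓ).2 _ (by omega) hpco
  -- the interior breakpoint sets are pairwise disjoint
  have hdisj : ∀ ℓ ∈ G, ∀ ℓ' ∈ G, ℓ ≠ ℓ' → Disjoint (A ℓ) (A ℓ') := by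
    intro ℓ _ ℓ' _ hne
    have key : ∀ u v : Fin K, u < v → Disjoint (A u) (A v) := by
      intro u v huv
      have hle : e u.succ ≤ e v.castSucc := he.monotone (by
        simp only [Fin.le_def, Fin.val_succ, Fin.coe_castSucc]
        exact huv)
      rw [Finset.disjoint_left]
      intro z hz hz'
      have h1 := (Finset.mem_Ioo.mp (Finset.mem_inter.mp hz).1).2
      have h2 := (Finset.mem_Ioo.mp (Finset.mem_inter.mp hz').1).1
      omega
    rcases lt_or_gt_of_ne hne with h | h
    · exact key _ _ h
    · exact (key _ _ h).symm
  -- all of them live inside the interior breakpoints of f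
  set D : Finset ℕ := Finset.image f Finset.univ \ {1, n + 1} with hD
  have hsubD : ∀ ℓ : Fin K, A ℓ ⊆ D := by
    intro ℓ z hz
    obtain ⟨hz1, hz2⟩ := Finset.mem_inter.mp hz
    obtain ⟨hza, hzb⟩ := Finset.mem_Ioo.mp hz1
    have h1 : 1 ≤ e ℓ.castSucc := by rw [← he0]; exact he.monotone (Fin.zero_le _)
    have h2 : e ℓ.succ ≤ n + 1 := by rw [← heK]; exact he.monotone (Fin.le_last _)
    rw [hD, Finset.mem_sdiff]
    refine ⟨hz2, ?_⟩
    simp only [Finset.mem_insert, Finset.mem_singleton]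
    push_neg
    omega
  have hDcard : D.card ≤ J - 1 := by
    have hsub : ({1, n + 1} : Finset ℕ) ⊆ Finset.image f Finset.univ := by
      intro z hz
      simp only [Finset.mem_insert, Finset.mem_singleton] at hz
      rcases hz with rfl | rfl
      · exact Finset.mem_image.mpr ⟨0, Finset.mem_univ _, hf0⟩
      · exact Finset.mem_image.mpr ⟨Fin.last J, Finset.mem_univ _, hflast⟩
    have hc2 : ({1, n + 1} : Finset ℕ).card = 2 := by
      rw [Finset.card_insert_of_notMem (by simp; omega), Finset.card_singleton]
    have hcim : (Finset.image f Finset.univ).card = J + 1 := by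
      rw [Finset.card_image_of_injective _ hf.injective, Finset.card_univ, Fintype.card_fin]
    rw [hD, Finset.card_sdiff_of_subset hsub, hc2, hcim]
    omega
  -- total count of interior breakpoints used by intervals of G
  have hsumA : ∑ ℓ ∈ G, (A ℓ).card ≤ J - 1 := by
    calc ∑ ℓ ∈ G, (A ℓ).card = (G.biUnion A).card := (Finset.card_biUnion hdisj).symm
      _ ≤ D.card := Finset.card_le_card (by
          intro z hz
          obtain ⟨ℓ, _, hzℓ⟩ := Finset.mem_biUnion.mp hz
          exact hsubD ℓ hzℓ)
      _ ≤ J - 1 := hDcard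
  have hGcard : G.card ≤ K := by
    calc G.card ≤ (Finset.univ : Finset (Fin K)).card := Finset.card_le_univ G
      _ = K := by rw [Finset.card_univ, Fintype.card_fin]
  have hsumj : ∑ ℓ ∈ G, j ℓ < K + k := by
    have h1 : ∑ ℓ ∈ G, j ℓ ≤ ∑ ℓ ∈ G, ((A ℓ).card + 1) :=
      Finset.sum_le_sum fun ℓ _ => hjle ℓ
    rw [Finset.sum_add_distrib, Finset.sum_const, smul_eq_mul, mul_one] at h1
    omega
  -- conclude
  have hKpos : (0 : ℝ) < K := by exact_mod_cast hK
  rcases G.eq_empty_or_nonempty with rfl | hGne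
  · simp only [Finset.sum_empty]
    have hk0 : (0 : ℝ) ≤ k := Nat.cast_nonneg k
    have : (0 : ℝ) < (K : ℝ) + k := by linarith
    positivity
  · have h1 : ∑ ℓ ∈ G, chiSq (Finset.Ico (e ℓ.castSucc) (e ℓ.succ)) p q <
        ∑ ℓ ∈ G, (j ℓ : ℝ) * ε ^ 2 / K := Finset.sum_lt_sum_of_nonempty hGne hG
    have h2 : ∑ ℓ ∈ G, (j ℓ : ℝ) * ε ^ 2 / K ≤ ((K : ℝ) + k) * ε ^ 2 / K := by
      rw [← Finset.sum_div, ← Finset.sum_mul]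
      have hc : (∑ ℓ ∈ G, (j ℓ : ℝ)) ≤ (K : ℝ) + k := by
        have : ((∑ ℓ ∈ G, j ℓ : ℕ) : ℝ) ≤ ((K + k : ℕ) : ℝ) := Nat.cast_le.mpr hsumj.le
        push_cast at this
        linarith
      gcongr
    exact lt_of_lt_of_le h1 h2
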